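/- (Comparison with Goldman's formula, n ≥ 3) Let the intersection curve ∂F ∩ P(ξ, u^j(ξ)) be given near ξ by the n−1 implicit equations f = 0, p_{k₁ξ} = 0, …, p_{k_{n−2}ξ} = 0. Then Goldman's curvature of this intersection curve at ξ equals k_G(ξ) = |f_{x_i x_i}(ξ) f_{x_j}(ξ)² − 2 f_{x_i}(ξ) f_{x_j}(ξ) f_{x_i x_j}(ξ) + f_{x_j x_j}(ξ) f_{x_i}(ξ)²| / (‖∇f(ξ)‖ (f_{x_i}(ξ)² + f_{x_j}(ξ)²)). -/

import Mathlib

open RealInnerProductSpace Filter Metric Topology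

noncomputable section

abbrev Euc (n : ℕ) := EuclideanSpace ℝ (Fin n)

/-- The polar set `F°`. -/
def polarSet {n : ℕ} (F : Set (Euc n)) : Set (Euc n) := {y | ∀ x ∈ F, ⟪x, y⟫ ≤ 1}

/-- The normal cone of convex analysis to `F` at `ξ`. -/
def normalCone {n : ℕ} (F : Set (Euc n)) (ξ : Euc n) : Set (Euc n) :=
  {ζ | ∀ y ∈ F, ⟪y - ξ, ζ⟫ ≤ 0}

/-- The tangent hyperplane to `F` at `ξ`. -/
def tangentHyp {n : ℕ} (F : Set (Euc n)) (ξ : Euc n) : Set (Euc n) :=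
  {v | ∀ ζ ∈ normalCone F ξ, ⟪v, ζ⟫ = 0}

/-- The 2-dimensional plane `P(η, u) = span{∇f(η), u} + η`. -/
def planeP {n : ℕ} (f : Euc n → ℝ) (η u : Euc n) : Set (Euc n) :=
  {y | ∃ a b : ℝ, y = η + a • gradient f η + b • u}

/-- `η* = ∇f(η)/⟨η, ∇f(η)⟩`, the unique element of `N_F(η) ∩ ∂F°`. -/
def etaStar {n : ℕ} (f : Euc n → ℝ) (η : Euc n) : Euc n :=
  (⟪η, gradient f η⟫)⁻¹ • gradient f η

/-- The 2-dimensional modulus of strict convexity `Ĉ_F(r, η, u)`. -/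
def Chat {n : ℕ} (F : Set (Euc n)) (f : Euc n → ℝ) (r : ℝ) (η u : Euc n) : ℝ :=
  sInf {t | ∃ y, y ∈ F ∧ y ∈ planeP f η u ∧ r ≤ ‖η - y‖ ∧ t = ⟪η - y, etaStar f η⟫}

/-- The tangent vector at `η` corresponding to a tangent vector `u` at `ξ`: the
coordinates `j ≠ i` agree with those of `u` and the `i`-th coordinate is determined
by tangency at `η`.  For `u = e_j` this is the tangent basis vector `u^j(η)`. -/
def uAt {n : ℕ} (f : Euc n → ℝ) (i : Fin n) (u : Euc n) (η : Euc n) : Euc n :=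
  ∑ j ∈ Finset.univ.erase i,
    u j • (EuclideanSpace.single j (1:ℝ) -
      (gradient f η j / gradient f η i) • EuclideanSpace.single i (1:ℝ))

/-- The directional lower curvature `γ̂_F(ξ, u(ξ))`, a liminf of the directional modulus
of strict convexity over `r²` as `(r, η) → (0⁺, ξ)`, `η ∈ ∂F`. -/
def gammaDir {n : ℕ} (F : Set (Euc n)) (f : Euc n → ℝ) (i : Fin n) (ξ u : Euc n) : ℝ :=
  Filter.liminf (fun p : ℝ × Euc n => Chat F f p.1 p.2 (uAt f i u p.2) / p.1 ^ 2)
    ((𝓝[>] (0:ℝ)) ×ˢ (𝓝 ξ ⊓ 𝓟 (frontier F)))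

/-- The Hessian bilinear form `⟨∇²f(ξ)u, v⟩`. -/
def hessQ {n : ℕ} (f : Euc n → ℝ) (ξ u v : Euc n) : ℝ := ⟪fderiv ℝ (gradient f) ξ u, v⟫

/-- The square matrix whose determinant is the `c'`-th component of the formal
determinant tangent vector `Tan(f, p_{k₁ξ}, …, p_{k_{n−2}ξ})(η)`: one row (row `i`) is
the basis-selector row `e_{c'}`, one row (row `j`) is `∇f(η)`, and for `k ∉ {i, j}` the
row `k` is `∇p_{kξ}`, where
`p_{kξ}(η) = η_k − ξ_k + a_{ki}(ξ)(η_i − ξ_i) + a_{kj}(ξ)(η_j − ξ_j)` and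
`a_{kl}(ξ) = −f_{x_l}(ξ)f_{x_k}(ξ)/(f_{x_i}(ξ)² + f_{x_j}(ξ)²)`. -/
def goldmanMat {m : ℕ} (f : Euc m → ℝ) (ξ : Euc m) (i j : Fin m) (η : Euc m)
    (c' : Fin m) : Matrix (Fin m) (Fin m) ℝ :=
  fun r c =>
    if r = i then (if c = c' then 1 else 0)
    else if r = j then gradient f η c
    else if c = r then 1
    else if c = i then
      -(gradient f ξ i * gradient f ξ r) / (gradient f ξ i ^ 2 + gradient f ξ j ^ 2)
    else if c = j then
      -(gradient f ξ j * gradient f ξ r) / (gradient f ξ i ^ 2 + gradient f ξ j ^ 2)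
    else 0

/-- The formal determinant tangent vector of the intersection curve
`∂F ∩ P(ξ, u^j(ξ))`, as a function of `η`. -/
def goldmanTan {m : ℕ} (f : Euc m → ℝ) (ξ : Euc m) (i j : Fin m) (η : Euc m) : Euc m :=
  (WithLp.equiv 2 (Fin m → ℝ)).symm fun c' => Matrix.det (goldmanMat f ξ i j η c')

/-- Squared magnitude of the exterior product: `‖u ∧ v‖² = Σ_{r<s} (u_r v_s − u_s v_r)²`. -/
def wedgeNormSq {m : ℕ} (u v : Euc m) : ℝ :=
  ∑ p ∈ Finset.univ.filter (fun p : Fin m × Fin m => p.1 < p.2),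
    (u p.1 * v p.2 - u p.2 * v p.1) ^ 2

/-- Goldman's curvature `k_G = ‖(Tan ∗ ∇Tan) ∧ Tan‖/‖Tan‖³` of the curve defined by
`n − 1` implicit hypersurfaces; `Tan ∗ ∇Tan` is the derivative of `Tan` at `ξ` in the
direction `Tan(ξ)`. -/
def goldmanCurv {m : ℕ} (f : Euc m → ℝ) (ξ : Euc m) (i j : Fin m) : ℝ :=
  Real.sqrt (wedgeNormSq
      (fderiv ℝ (goldmanTan f ξ i j) ξ (goldmanTan f ξ i j ξ)) (goldmanTan f ξ i j ξ)) /
    ‖goldmanTan f ξ i j ξ‖ ^ 3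

namespace GA
variable {n : ℕ} (f : Euc n → ℝ) (ξ : Euc n) (i j : Fin n)

def av (k : Fin n) : ℝ :=
  if k = i ∨ k = j then 0 else
    -(gradient f ξ i * gradient f ξ k) / (gradient f ξ i ^ 2 + gradient f ξ j ^ 2)
def bv (k : Fin n) : ℝ :=
  if k = i ∨ k = j then 0 else
    -(gradient f ξ j * gradient f ξ k) / (gradient f ξ i ^ 2 + gradient f ξ j ^ 2)

def U : Matrix (Fin n) (Fin 4) ℝ := fun r q =>
  if q = 0 then (if r = i then 1 else 0)
  else if q = 1 then (if r = j then 1 else 0)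
  else if q = 2 then av f ξ i j r
  else bv f ξ i j r

def V (η : Euc n) (c' : Fin n) : Matrix (Fin 4) (Fin n) ℝ := fun p c =>
  if p = 0 then (if c = c' then 1 else 0) - (if c = i then 1 else 0)
  else if p = 1 then gradient f η c - (if c = j then 1 else 0)
  else if p = 2 then (if c = i then 1 else 0)
  else (if c = j then 1 else 0)

lemma mat_eq (hj : j ≠ i) (η : Euc n) (c' : Fin n) :
    goldmanMat f ξ i j η c' = 1 + U f ξ i j * V f i j η c' := by
  have hij : i ≠ j := Ne.symm hj
  ext r c
  simp only [goldmanMat, Matrix.add_apply, Matrix.one_apply, Matrix.mul_apply,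
    Fin.sum_univ_four, U, V]
  norm_num
  by_cases hri : r = i
  · by_cases hci : c = i
    · simp [hri, hci, av, bv, hj, hij]
    · have hrc : ¬ r = c := fun h => hci (h.symm.trans hri)
      have hic : ¬ i = c := fun h => hci h.symm
      simp [hri, hci, hrc, av, bv, hj, hij, hic]
  · by_cases hrj : r = j
    · by_cases hcj : c = j
      · simp [hri, hrj, hcj, av, bv, hj, hij]
      · have hrc : ¬ r = c := fun h => hcj (h.symm.trans hrj)
        have hjc : ¬ j = c := fun h => hcj h.symm
        simp [hri, hrj, hcj, hrc, av, bv, hj, hij, hjc]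
    · have hir : ¬ i = r := fun h => hri h.symm
      have hjr : ¬ j = r := fun h => hrj h.symm
      by_cases hcr : c = r
      · simp [hcr, hri, hrj, hir, hjr, av, bv, hj, hij]
      · by_cases hci : c = i
        · have hrc : ¬ r = c := fun h => hcr h.symm
          have hcj : ¬ c = j := fun h => hj ((hci.symm.trans h).symm)
          simp [hri, hrj, hcr, hrc, hci, hir, hjr, hcj, av, bv, hij]
        · by_cases hcj : c = j
          · have hrc : ¬ r = c := fun h => hcr h.symm
            simp [hri, hrj, hcr, hrc, hci, hcj, hir, hjr, av, bv, hj, hij]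
          · have hrc : ¬ r = c := fun h => hcr h.symm
            simp [hri, hrj, hcr, hrc, hci, hcj, av, bv]

theorem det4 (A : Matrix (Fin 4) (Fin 4) ℝ) : A.det =
    A 0 0 * (A 1 1 * (A 2 2 * A 3 3 - A 2 3 * A 3 2) - A 1 2 * (A 2 1 * A 3 3 - A 2 3 * A 3 1) + A 1 3 * (A 2 1 * A 3 2 - A 2 2 * A 3 1))
  - A 0 1 * (A 1 0 * (A 2 2 * A 3 3 - A 2 3 * A 3 2) - A 1 2 * (A 2 0 * A 3 3 - A 2 3 * A 3 0) + A 1 3 * (A 2 0 * A 3 2 - A 2 2 * A 3 0))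
  + A 0 2 * (A 1 0 * (A 2 1 * A 3 3 - A 2 3 * A 3 1) - A 1 1 * (A 2 0 * A 3 3 - A 2 3 * A 3 0) + A 1 3 * (A 2 0 * A 3 1 - A 2 1 * A 3 0))
  - A 0 3 * (A 1 0 * (A 2 1 * A 3 2 - A 2 2 * A 3 1) - A 1 1 * (A 2 0 * A 3 2 - A 2 2 * A 3 0) + A 1 2 * (A 2 0 * A 3 1 - A 2 1 * A 3 0)) := by
  rw [Matrix.det_succ_row_zero]
  simp [Fin.sum_univ_succ, Matrix.det_fin_three,
    show (Fin.succ 2 : Fin 4) = 3 from rfl,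
    show ((2 : Fin 4).succAbove 2 : Fin 4) = 3 from rfl,
    show ((1 : Fin 4).succAbove 2 : Fin 4) = 3 from rfl,
    show ((3 : Fin 4).succAbove 2 : Fin 4) = 2 from rfl,
    show (Fin.castSucc 2 : Fin 4) = 2 from rfl]
  ring

lemma av_i : av f ξ i j i = 0 := by simp [av]
lemma av_j : av f ξ i j j = 0 := by simp [av]
lemma bv_i : bv f ξ i j i = 0 := by simp [bv]
lemma bv_j : bv f ξ i j j = 0 := by simp [bv]

lemma VU_eq (hj : j ≠ i) (η : Euc n) (c' : Fin n) :
    (1 : Matrix (Fin 4) (Fin 4) ℝ) + V f i j η c' * U f ξ i j =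
      !![if c' = i then 1 else 0, if c' = j then 1 else 0, av f ξ i j c', bv f ξ i j c';
         gradient f η i, gradient f η j,
           ∑ c, gradient f η c * av f ξ i j c, ∑ c, gradient f η c * bv f ξ i j c;
         1, 0, 1, 0;
         0, 1, 0, 1] := by
  have hij : i ≠ j := Ne.symm hj
  ext p q
  fin_cases p <;> fin_cases q <;>
    simp [Matrix.mul_apply, Matrix.one_apply, U, V, mul_ite, ite_mul, mul_zero, zero_mul,
      mul_one, one_mul, sub_mul, mul_sub, Finset.sum_sub_distrib, Finset.sum_ite_eq,
      Finset.sum_ite_eq', av_i, av_j, bv_i, bv_j, hj, hij] <;>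
    simp [eq_comm]

lemma tan_det (hj : j ≠ i) (η : Euc n) (c' : Fin n) :
    (goldmanMat f ξ i j η c').det =
    (av f ξ i j c' - (if c' = i then 1 else 0)) *
        ((∑ c, gradient f η c * bv f ξ i j c) - gradient f η j)
      - (bv f ξ i j c' - (if c' = j then 1 else 0)) *
        ((∑ c, gradient f η c * av f ξ i j c) - gradient f η i) := by
  rw [mat_eq f ξ i j hj η c', Matrix.det_one_add_mul_comm, VU_eq f ξ i j hj η c', det4]
  simp only [Matrix.cons_val', Matrix.cons_val_zero, Matrix.cons_val_one, Matrix.head_cons,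
    Matrix.empty_val', Matrix.cons_val_fin_one, Matrix.head_fin_const, Matrix.of_apply,
    Matrix.tail_cons, Matrix.cons_val_succ,
    show (3 : Fin 4) = Fin.succ 2 from rfl, show (2 : Fin 4) = Fin.succ 1 from rfl,
    show (1 : Fin 4) = Fin.succ 0 from rfl,
    show (2 : Fin 3) = Fin.succ 1 from rfl, show (1 : Fin 3) = Fin.succ 0 from rfl,
    show (1 : Fin 2) = Fin.succ 0 from rfl]
  ring

end GA
namespace GA
variable {m : ℕ}

lemma wedge_lagrange (u v : Euc m) :
    wedgeNormSq u v = (∑ c, u c ^ 2) * (∑ c, v c ^ 2) - (∑ c, u c * v c) ^ 2 := by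
  classical
  set g : Fin m × Fin m → ℝ := fun p => (u p.1 * v p.2 - u p.2 * v p.1) ^ 2 with hg
  have hsub : Finset.univ.filter (fun p : Fin m × Fin m => p.2 < p.1)
      ⊆ Finset.univ.filter (fun p : Fin m × Fin m => ¬ p.1 < p.2) := by
    intro p hp
    simp only [Finset.mem_filter, Finset.mem_univ, true_and] at hp ⊢
    exact not_lt.2 hp.le
  have hzero : ∀ p ∈ Finset.univ.filter (fun p : Fin m × Fin m => ¬ p.1 < p.2),
      p ∉ Finset.univ.filter (fun p : Fin m × Fin m => p.2 < p.1) → g p = 0 := by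
    intro p hp hp2
    simp only [Finset.mem_filter, Finset.mem_univ, true_and, not_lt] at hp hp2
    have h12 : p.1 = p.2 := le_antisymm hp2 hp
    simp only [hg]; rw [h12]; ring
  have hswap : ∑ p ∈ Finset.univ.filter (fun p : Fin m × Fin m => p.2 < p.1), g p
      = ∑ p ∈ Finset.univ.filter (fun p : Fin m × Fin m => p.1 < p.2), g p := by
    refine Finset.sum_nbij' (fun p => Prod.swap p) (fun p => Prod.swap p) ?_ ?_ ?_ ?_ ?_
    · intro p hp; simp only [Finset.mem_filter, Finset.mem_univ, true_and] at hp ⊢; exact hp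
    · intro p hp; simp only [Finset.mem_filter, Finset.mem_univ, true_and] at hp ⊢; exact hp
    · intro p _; simp
    · intro p _; simp
    · intro p _; simp only [hg, Prod.fst_swap, Prod.snd_swap]; ring
  have htot : ∑ p : Fin m × Fin m, g p = 2 * wedgeNormSq u v := by
    rw [← Finset.sum_filter_add_sum_filter_not Finset.univ (fun p : Fin m × Fin m => p.1 < p.2) g]
    rw [← Finset.sum_subset hsub hzero, hswap]
    simp only [wedgeNormSq, hg]; ring
  have hexp : ∑ p : Fin m × Fin m, g p
      = 2 * ((∑ c, u c ^ 2) * (∑ c, v c ^ 2) - (∑ c, u c * v c) ^ 2) := by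
    rw [← Finset.univ_product_univ, Finset.sum_product]
    have : ∀ r s : Fin m, g (r, s)
        = u r ^ 2 * v s ^ 2 + u s ^ 2 * v r ^ 2 - 2 * ((u r * v r) * (u s * v s)) := by
      intro r s; simp only [hg]; ring
    have hrow : ∀ r, ∑ s, g (r, s)
        = u r ^ 2 * (∑ c, v c ^ 2) + (∑ c, u c ^ 2) * v r ^ 2
          - 2 * (u r * v r) * (∑ c, u c * v c) := by
      intro r
      have e3 : ∑ s, 2 * (u r * v r * (u s * v s)) = 2 * (u r * v r) * ∑ c, u c * v c := by
        rw [Finset.mul_sum]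
        exact Finset.sum_congr rfl fun s _ => by ring
      simp_rw [this]
      rw [Finset.sum_sub_distrib, Finset.sum_add_distrib, ← Finset.mul_sum, ← Finset.sum_mul, e3]
    have o3 : ∑ r, 2 * (u r * v r) * (∑ c, u c * v c) = 2 * (∑ c, u c * v c) ^ 2 := by
      rw [← Finset.sum_mul, ← Finset.mul_sum, sq]; ring
    simp_rw [hrow]
    rw [Finset.sum_sub_distrib, Finset.sum_add_distrib, ← Finset.sum_mul, ← Finset.mul_sum, o3]
    ring
  linarith [htot, hexp]

end GA
namespace GA
variable {n : ℕ} (f : Euc n → ℝ) (ξ : Euc n) (i j : Fin n)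

def Aeu : Euc n := (WithLp.equiv 2 (Fin n → ℝ)).symm
  fun k => av f ξ i j k - (if k = i then 1 else 0)
def Beu : Euc n := (WithLp.equiv 2 (Fin n → ℝ)).symm
  fun k => bv f ξ i j k - (if k = j then 1 else 0)

lemma Aeu_apply (k : Fin n) : Aeu f ξ i j k = av f ξ i j k - (if k = i then 1 else 0) := rfl
lemma Beu_apply (k : Fin n) : Beu f ξ i j k = bv f ξ i j k - (if k = j then 1 else 0) := rfl

lemma inner_euc (x y : Euc n) : ⟪x, y⟫ = ∑ c, x c * y c := by
  simp [PiLp.inner_apply, RCLike.inner_apply, conj_trivial]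
  exact Finset.sum_congr rfl fun c _ => mul_comm _ _

lemma inner_Aeu (x : Euc n) :
    ⟪Aeu f ξ i j, x⟫ = (∑ c, x c * av f ξ i j c) - x i := by
  rw [inner_euc]
  simp only [Aeu_apply, sub_mul, ite_mul, one_mul, zero_mul, Finset.sum_sub_distrib,
    Finset.sum_ite_eq', Finset.mem_univ, if_true]
  congr 1
  exact Finset.sum_congr rfl fun c _ => mul_comm _ _

lemma inner_Beu (x : Euc n) :
    ⟪Beu f ξ i j, x⟫ = (∑ c, x c * bv f ξ i j c) - x j := by
  rw [inner_euc]
  simp only [Beu_apply, sub_mul, ite_mul, one_mul, zero_mul, Finset.sum_sub_distrib,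
    Finset.sum_ite_eq', Finset.mem_univ, if_true]
  congr 1
  exact Finset.sum_congr rfl fun c _ => mul_comm _ _

lemma tan_eq (hj : j ≠ i) (η : Euc n) :
    goldmanTan f ξ i j η
      = ⟪Beu f ξ i j, gradient f η⟫ • Aeu f ξ i j - ⟪Aeu f ξ i j, gradient f η⟫ • Beu f ξ i j := by
  ext c'
  have h0 : goldmanTan f ξ i j η c' = (goldmanMat f ξ i j η c').det := rfl
  rw [h0, tan_det f ξ i j hj η c']
  simp only [PiLp.sub_apply, PiLp.smul_apply, smul_eq_mul, inner_Aeu, inner_Beu,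
    Aeu_apply, Beu_apply]
  ring

def Phi : Euc n →L[ℝ] Euc n :=
  (innerSL ℝ (Beu f ξ i j)).smulRight (Aeu f ξ i j)
    - (innerSL ℝ (Aeu f ξ i j)).smulRight (Beu f ξ i j)

lemma Phi_apply (v : Euc n) :
    Phi f ξ i j v = ⟪Beu f ξ i j, v⟫ • Aeu f ξ i j - ⟪Aeu f ξ i j, v⟫ • Beu f ξ i j := rfl

lemma tan_fun_eq (hj : j ≠ i) :
    goldmanTan f ξ i j = fun η => Phi f ξ i j (gradient f η) :=
  funext fun η => (tan_eq f ξ i j hj η).trans (Phi_apply f ξ i j _).symm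

lemma tan_fderiv (hj : j ≠ i) (hdiff : DifferentiableAt ℝ (gradient f) ξ) :
    fderiv ℝ (goldmanTan f ξ i j) ξ
      = (Phi f ξ i j).comp (fderiv ℝ (gradient f) ξ) := by
  rw [tan_fun_eq f ξ i j hj]
  exact (((Phi f ξ i j).hasFDerivAt).comp ξ hdiff.hasFDerivAt).fderiv

lemma grad_diff {δ : ℝ} (hδ : 0 < δ) (hf : ContDiffOn ℝ 2 f (Metric.ball ξ δ)) :
    DifferentiableAt ℝ (fderiv ℝ f) ξ := by
  have hct : ContDiffAt ℝ 2 f ξ := hf.contDiffAt (Metric.ball_mem_nhds ξ hδ)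
  have h1 : ContDiffAt ℝ 1 (fderiv ℝ f) ξ := hct.fderiv_right (by norm_num)
  exact h1.differentiableAt one_ne_zero

lemma grad_diff' {δ : ℝ} (hδ : 0 < δ) (hf : ContDiffOn ℝ 2 f (Metric.ball ξ δ)) :
    DifferentiableAt ℝ (gradient f) ξ := by
  have h2 := grad_diff f ξ hδ hf
  exact (((InnerProductSpace.toDual ℝ (Euc n)).symm.toContinuousLinearEquiv.differentiableAt).comp
    ξ h2 : DifferentiableAt ℝ (fun x => (InnerProductSpace.toDual ℝ (Euc n)).symm (fderiv ℝ f x)) ξ)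

lemma hess_eq_snd (h2 : DifferentiableAt ℝ (fderiv ℝ f) ξ)
    (hgd : DifferentiableAt ℝ (gradient f) ξ) (u v : Euc n) :
    hessQ f ξ u v = fderiv ℝ (fderiv ℝ f) ξ u v := by
  have e1 : (fun x => (fderiv ℝ f x) v) = fun x => ⟪v, gradient f x⟫ := by
    funext x
    rw [real_inner_comm]
    exact (InnerProductSpace.toDual_symm_apply).symm
  have d1 : HasFDerivAt (fun x => ⟪v, gradient f x⟫)
      ((innerSL ℝ v).comp (fderiv ℝ (gradient f) ξ)) ξ :=
    ((innerSL ℝ v).hasFDerivAt).comp ξ hgd.hasFDerivAt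
  have d2 : HasFDerivAt (fun x => (fderiv ℝ f x) v)
      ((ContinuousLinearMap.apply ℝ ℝ v).comp (fderiv ℝ (fderiv ℝ f) ξ)) ξ :=
    ((ContinuousLinearMap.apply ℝ ℝ v).hasFDerivAt).comp ξ h2.hasFDerivAt
  rw [e1] at d2
  have heq := d1.unique d2
  have := congrFun (congrArg (fun (L : Euc n →L[ℝ] ℝ) => (L : Euc n → ℝ)) heq) u
  simp only [ContinuousLinearMap.coe_comp', Function.comp_apply, innerSL_apply_apply,
    ContinuousLinearMap.apply_apply] at this
  rw [hessQ, real_inner_comm]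
  exact this

lemma hess_symm {δ : ℝ} (hδ : 0 < δ) (hf : ContDiffOn ℝ 2 f (Metric.ball ξ δ)) (u v : Euc n) :
    hessQ f ξ u v = hessQ f ξ v u := by
  have hct : ContDiffAt ℝ 2 f ξ := hf.contDiffAt (Metric.ball_mem_nhds ξ hδ)
  have hs : IsSymmSndFDerivAt ℝ f ξ := hct.isSymmSndFDerivAt (by norm_num)
  rw [hess_eq_snd f ξ (grad_diff f ξ hδ hf) (grad_diff' f ξ hδ hf),
    hess_eq_snd f ξ (grad_diff f ξ hδ hf) (grad_diff' f ξ hδ hf)]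
  exact hs u v

end GA
namespace GA
variable {n : ℕ} (f : Euc n → ℝ) (ξ : Euc n) (i j : Fin n)

lemma sum_or (hij : i ≠ j) (t : Fin n → ℝ) :
    ∑ c, (if c = i ∨ c = j then 0 else t c) = (∑ c, t c) - t i - t j := by
  have key : ∀ c, (if c = i ∨ c = j then (0:ℝ) else t c)
      = t c - (if c = i then t c else 0) - (if c = j then t c else 0) := by
    intro c
    by_cases h1 : c = i
    · subst h1; simp [hij]
    · by_cases h2 : c = j
      · subst h2; simp [h1]
      · simp [h1, h2]
  simp_rw [key, Finset.sum_sub_distrib, Finset.sum_ite_eq', Finset.mem_univ, if_true]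

lemma sum_split (hij : i ≠ j) (t : Fin n → ℝ) (K : ℝ)
    (hK : ∀ c, c ≠ i → c ≠ j → t c = K * gradient f ξ c ^ 2) :
    ∑ c, t c = K * ((∑ c, gradient f ξ c ^ 2) - gradient f ξ i ^ 2 - gradient f ξ j ^ 2)
      + t i + t j := by
  have key : ∀ c, t c = (if c = i ∨ c = j then 0 else K * gradient f ξ c ^ 2)
      + (if c = i then t i else 0) + (if c = j then t j else 0) := by
    intro c
    by_cases h1 : c = i
    · subst h1; simp [hij]
    · by_cases h2 : c = j
      · subst h2; simp [h1]
      · simp [h1, h2, hK c h1 h2]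
  calc ∑ c, t c = ∑ c, ((if c = i ∨ c = j then 0 else K * gradient f ξ c ^ 2)
      + (if c = i then t i else 0) + (if c = j then t j else 0)) :=
    Finset.sum_congr rfl fun c _ => key c
  _ = _ := by
    rw [Finset.sum_add_distrib, Finset.sum_add_distrib, sum_or i j hij]
    simp only [Finset.sum_ite_eq', Finset.mem_univ, if_true]
    rw [← Finset.mul_sum]
    ring

lemma v1 (hij : i ≠ j) :
    ⟪Aeu f ξ i j, gradient f ξ⟫
      = -(gradient f ξ i) / (gradient f ξ i ^ 2 + gradient f ξ j ^ 2)
          * ((∑ c, gradient f ξ c ^ 2) - gradient f ξ i ^ 2 - gradient f ξ j ^ 2)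
        - gradient f ξ i := by
  rw [inner_euc]
  rw [sum_split f ξ i j hij _
      (-(gradient f ξ i) / (gradient f ξ i ^ 2 + gradient f ξ j ^ 2))
      (fun c h1 h2 => by simp [Aeu_apply, av, h1, h2]; ring)]
  simp [Aeu_apply, av_i, av_j, hij, Ne.symm hij]
  ring

lemma v2 (hij : i ≠ j) :
    ⟪Beu f ξ i j, gradient f ξ⟫
      = -(gradient f ξ j) / (gradient f ξ i ^ 2 + gradient f ξ j ^ 2)
          * ((∑ c, gradient f ξ c ^ 2) - gradient f ξ i ^ 2 - gradient f ξ j ^ 2)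
        - gradient f ξ j := by
  rw [inner_euc]
  rw [sum_split f ξ i j hij _
      (-(gradient f ξ j) / (gradient f ξ i ^ 2 + gradient f ξ j ^ 2))
      (fun c h1 h2 => by simp [Beu_apply, bv, h1, h2]; ring)]
  simp [Beu_apply, bv_i, bv_j, hij, Ne.symm hij]
  ring

lemma v3 (hij : i ≠ j) :
    ⟪Aeu f ξ i j, Aeu f ξ i j⟫
      = (gradient f ξ i / (gradient f ξ i ^ 2 + gradient f ξ j ^ 2)) ^ 2
          * ((∑ c, gradient f ξ c ^ 2) - gradient f ξ i ^ 2 - gradient f ξ j ^ 2)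
        + 1 := by
  rw [inner_euc]
  rw [sum_split f ξ i j hij _
      ((gradient f ξ i / (gradient f ξ i ^ 2 + gradient f ξ j ^ 2)) ^ 2)
      (fun c h1 h2 => by simp [Aeu_apply, av, h1, h2]; ring)]
  simp [Aeu_apply, av_i, av_j, hij, Ne.symm hij]

lemma v4 (hij : i ≠ j) :
    ⟪Beu f ξ i j, Beu f ξ i j⟫
      = (gradient f ξ j / (gradient f ξ i ^ 2 + gradient f ξ j ^ 2)) ^ 2
          * ((∑ c, gradient f ξ c ^ 2) - gradient f ξ i ^ 2 - gradient f ξ j ^ 2)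
        + 1 := by
  rw [inner_euc]
  rw [sum_split f ξ i j hij _
      ((gradient f ξ j / (gradient f ξ i ^ 2 + gradient f ξ j ^ 2)) ^ 2)
      (fun c h1 h2 => by simp [Beu_apply, bv, h1, h2]; ring)]
  simp [Beu_apply, bv_i, bv_j, hij, Ne.symm hij]

lemma v5 (hij : i ≠ j) :
    ⟪Aeu f ξ i j, Beu f ξ i j⟫
      = gradient f ξ i / (gradient f ξ i ^ 2 + gradient f ξ j ^ 2)
          * (gradient f ξ j / (gradient f ξ i ^ 2 + gradient f ξ j ^ 2))
          * ((∑ c, gradient f ξ c ^ 2) - gradient f ξ i ^ 2 - gradient f ξ j ^ 2) := by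
  rw [inner_euc]
  rw [sum_split f ξ i j hij _
      (gradient f ξ i / (gradient f ξ i ^ 2 + gradient f ξ j ^ 2)
        * (gradient f ξ j / (gradient f ξ i ^ 2 + gradient f ξ j ^ 2)))
      (fun c h1 h2 => by simp [Aeu_apply, Beu_apply, av, bv, h1, h2]; ring)]
  simp [Aeu_apply, Beu_apply, av_i, av_j, bv_i, bv_j, hij, Ne.symm hij]

lemma hvec (hij : i ≠ j) :
    gradient f ξ i • Beu f ξ i j - gradient f ξ j • Aeu f ξ i j
      = gradient f ξ j • (EuclideanSpace.single i (1:ℝ))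
        - gradient f ξ i • (EuclideanSpace.single j (1:ℝ)) := by
  ext c
  simp only [PiLp.sub_apply, PiLp.smul_apply, smul_eq_mul, Aeu_apply, Beu_apply,
    EuclideanSpace.single_apply]
  by_cases h1 : c = i
  · subst h1; simp [hij, av_i, bv_i, Ne.symm hij]
  · by_cases h2 : c = j
    · subst h2; simp [h1, av_j, bv_j, fun h => h1 h]
    · simp [h1, h2, av, bv]
      ring
end GA
namespace GA
variable {n : ℕ}

lemma wedge_inner (u v : Euc n) :
    wedgeNormSq u v = ⟪u, u⟫ * ⟪v, v⟫ - ⟪u, v⟫ ^ 2 := by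
  rw [wedge_lagrange, inner_euc, inner_euc, inner_euc]
  simp_rw [pow_two]

lemma inner_comb (p q r s : ℝ) (A B : Euc n) :
    ⟪p • A - q • B, r • A - s • B⟫
      = p * r * ⟪A, A⟫ - (p * s + q * r) * ⟪A, B⟫ + q * s * ⟪B, B⟫ := by
  simp only [inner_sub_left, inner_sub_right, real_inner_smul_left, real_inner_smul_right,
    real_inner_comm B A]
  ring

lemma tt_scalar (Gi Gj N D : ℝ) (hD : D ≠ 0) (hDdef : D = Gi^2 + Gj^2) :
    (-(Gj*N)/D) * (-(Gj*N)/D) * ((Gi/D)^2 * (N - Gi^2 - Gj^2) + 1)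
    - ((-(Gj*N)/D) * (-(Gi*N)/D) + (-(Gi*N)/D) * (-(Gj*N)/D))
        * (Gi/D * (Gj/D) * (N - Gi^2 - Gj^2))
    + (-(Gi*N)/D) * (-(Gi*N)/D) * ((Gj/D)^2 * (N - Gi^2 - Gj^2) + 1)
    = N^2 / D := by
  subst hDdef
  field_simp
  ring

lemma final_num (N D Q : ℝ) (hN : 0 < N) (hD : 0 < D) :
    Real.sqrt ((-((N / D) ^ 2 * Q)) ^ 2 * (N / D)) / (Real.sqrt (N ^ 2 / D)) ^ 3
      = |Q| / (Real.sqrt N * D) := by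
  have hsN : 0 < Real.sqrt N := Real.sqrt_pos.2 hN
  have hsD : 0 < Real.sqrt D := Real.sqrt_pos.2 hD
  have h1 : (-((N / D) ^ 2 * Q)) ^ 2 * (N / D)
      = (|Q| * N ^ 2 * Real.sqrt N / (D ^ 2 * Real.sqrt D)) ^ 2 := by
    have h1b : (|Q| * N ^ 2 * Real.sqrt N / (D ^ 2 * Real.sqrt D)) ^ 2
        = Q ^ 2 * N ^ 5 / D ^ 5 := by
      rw [div_pow, mul_pow, mul_pow, mul_pow, sq_abs, Real.sq_sqrt hN.le, Real.sq_sqrt hD.le]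
      field_simp
    rw [h1b]
    field_simp
  have h2 : N ^ 2 / D = (N / Real.sqrt D) ^ 2 := by
    rw [div_pow, Real.sq_sqrt hD.le]
  rw [h1, h2, Real.sqrt_sq (by positivity), Real.sqrt_sq (by positivity)]
  rw [div_pow, show Real.sqrt D ^ 3 = D * Real.sqrt D by
    rw [pow_succ, Real.sq_sqrt hD.le]]
  rw [div_div_div_eq]
  rw [div_eq_div_iff (by positivity) (by positivity)]
  ring_nf
  rw [Real.sq_sqrt hN.le]
  ring

end GA
theorem goldman_main_lemma
    {n : ℕ} (f : Euc n → ℝ) (ξ : Euc n) (δ : ℝ) (hδ : 0 < δ)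
    (hf : ContDiffOn ℝ 2 f (Metric.ball ξ δ))
    (i : Fin n) (hi : gradient f ξ i ≠ 0) (j : Fin n) (hj : j ≠ i) :
    goldmanCurv f ξ i j =
      |hessQ f ξ (EuclideanSpace.single i 1) (EuclideanSpace.single i 1) *
          gradient f ξ j ^ 2 -
        2 * gradient f ξ i * gradient f ξ j *
          hessQ f ξ (EuclideanSpace.single i 1) (EuclideanSpace.single j 1) +
        hessQ f ξ (EuclideanSpace.single j 1) (EuclideanSpace.single j 1) *
          gradient f ξ i ^ 2| /
      (Real.sqrt (∑ c, gradient f ξ c ^ 2) *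
        (gradient f ξ i ^ 2 + gradient f ξ j ^ 2)) := by
  classical
  have hij : i ≠ j := Ne.symm hj
  have hdg : DifferentiableAt ℝ (gradient f) ξ := GA.grad_diff' f ξ hδ hf
  have hsym : hessQ f ξ (EuclideanSpace.single i 1) (EuclideanSpace.single j 1)
      = hessQ f ξ (EuclideanSpace.single j 1) (EuclideanSpace.single i 1) :=
    GA.hess_symm f ξ hδ hf _ _
  set Hf : Euc n →L[ℝ] Euc n := fderiv ℝ (gradient f) ξ with hHf
  set Ei : Euc n := EuclideanSpace.single i (1:ℝ) with hEidef
  set Ej : Euc n := EuclideanSpace.single j (1:ℝ) with hEjdef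
  set Hii := hessQ f ξ Ei Ei with hHii
  set Hij := hessQ f ξ Ei Ej with hHij
  set Hjj := hessQ f ξ Ej Ej with hHjj
  set Gi := gradient f ξ i with hGidef
  set Gj := gradient f ξ j with hGjdef
  set D := Gi ^ 2 + Gj ^ 2 with hDdef
  set N := ∑ c, gradient f ξ c ^ 2 with hNdef
  set Q := Hii * Gj ^ 2 - 2 * Gi * Gj * Hij + Hjj * Gi ^ 2 with hQdef
  set A : Euc n := GA.Aeu f ξ i j with hAdef
  set B : Euc n := GA.Beu f ξ i j with hBdef
  have hD0 : (0:ℝ) < D := by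
    have h1 : (0:ℝ) < Gi ^ 2 := lt_of_le_of_ne (sq_nonneg _) (Ne.symm (pow_ne_zero 2 hi))
    nlinarith [sq_nonneg Gj]
  have hN0 : (0:ℝ) < N := by
    have h2 : gradient f ξ i ^ 2 ≤ ∑ c, gradient f ξ c ^ 2 :=
      Finset.single_le_sum (f := fun c => gradient f ξ c ^ 2)
        (fun c _ => sq_nonneg _) (Finset.mem_univ i)
    have h1 : (0:ℝ) < Gi ^ 2 := lt_of_le_of_ne (sq_nonneg _) (Ne.symm (pow_ne_zero 2 hi))
    rw [hNdef]
    calc (0:ℝ) < Gi ^ 2 := h1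
    _ ≤ _ := by rw [hGidef]; exact h2
  -- values
  have hr : ⟪B, gradient f ξ⟫ = -(Gj * N) / D := by
    rw [hBdef, GA.v2 f ξ i j hij, ← hGidef, ← hGjdef, ← hNdef, ← hDdef]
    field_simp
    ring
  have hs : ⟪A, gradient f ξ⟫ = -(Gi * N) / D := by
    rw [hAdef, GA.v1 f ξ i j hij, ← hGidef, ← hGjdef, ← hNdef, ← hDdef]
    field_simp
    ring
  have hTeq : goldmanTan f ξ i j ξ
      = ⟪B, gradient f ξ⟫ • A - ⟪A, gradient f ξ⟫ • B := GA.tan_eq f ξ i j hj ξ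
  have hTval : goldmanTan f ξ i j ξ = (N / D) • ((Gj:ℝ) • Ei - Gi • Ej) := by
    rw [hTeq, hr, hs, hEidef, hEjdef, ← GA.hvec f ξ i j hij, ← hGidef, ← hGjdef,
      ← hAdef, ← hBdef]
    module
  have hfd : fderiv ℝ (goldmanTan f ξ i j) ξ (goldmanTan f ξ i j ξ)
      = ⟪B, Hf (goldmanTan f ξ i j ξ)⟫ • A - ⟪A, Hf (goldmanTan f ξ i j ξ)⟫ • B := by
    rw [GA.tan_fderiv f ξ i j hj hdg]
    rfl
  have hh : Hf (goldmanTan f ξ i j ξ) = (N / D) • ((Gj:ℝ) • Hf Ei - Gi • Hf Ej) := by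
    rw [hTval]
    simp only [map_smul, map_sub]
  set hv : Euc n := Hf (goldmanTan f ξ i j ξ) with hhv
  -- hessian inner products
  have c1 : ⟪Ei, Hf Ei⟫ = Hii := (real_inner_comm _ _).trans rfl
  have c3 : ⟪Ej, Hf Ei⟫ = Hij := (real_inner_comm _ _).trans rfl
  have c4 : ⟪Ej, Hf Ej⟫ = Hjj := (real_inner_comm _ _).trans rfl
  have c2' : ⟪Ei, Hf Ej⟫ = Hij := by
    rw [real_inner_comm]
    exact (rfl : ⟪Hf Ej, Ei⟫ = hessQ f ξ Ej Ei).trans hsym.symm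
  have hcomb : Gj * ⟪A, hv⟫ - Gi * ⟪B, hv⟫ = -((N / D) * Q) := by
    have e1 : Gj * ⟪A, hv⟫ - Gi * ⟪B, hv⟫ = ⟪(Gj:ℝ) • A - Gi • B, hv⟫ := by
      simp only [inner_sub_left, real_inner_smul_left]
    have e2 : (Gj:ℝ) • A - Gi • B = -((Gj:ℝ) • Ei - Gi • Ej) := by
      rw [show (Gj:ℝ) • A - Gi • B = -((Gi:ℝ) • B - Gj • A) by module, hAdef, hBdef,
        hGidef, hGjdef, GA.hvec f ξ i j hij, ← hGidef, ← hGjdef, ← hEidef, ← hEjdef]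
    rw [e1, e2, hh]
    simp only [inner_neg_left, inner_sub_left, inner_sub_right, real_inner_smul_left,
      real_inner_smul_right, c1, c2', c3, c4]
    rw [hQdef]
    ring
  have hps : ⟪B, hv⟫ * ⟪A, gradient f ξ⟫ - ⟪A, hv⟫ * ⟪B, gradient f ξ⟫
      = -((N / D) ^ 2 * Q) := by
    rw [hr, hs]
    have e3 : ⟪B, hv⟫ * (-(Gi * N) / D) - ⟪A, hv⟫ * (-(Gj * N) / D)
        = (N / D) * (Gj * ⟪A, hv⟫ - Gi * ⟪B, hv⟫) := by ring
    rw [e3, hcomb]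
    ring
  have hαγ : ⟪A, A⟫ * ⟪B, B⟫ - ⟪A, B⟫ ^ 2 = N / D := by
    rw [hAdef, hBdef, GA.v3 f ξ i j hij, GA.v4 f ξ i j hij, GA.v5 f ξ i j hij,
      ← hGidef, ← hGjdef, ← hNdef, ← hDdef]
    field_simp
    ring
  have key : ∀ p q r s : ℝ, wedgeNormSq (p • A - q • B) (r • A - s • B)
      = (p * s - q * r) ^ 2 * (⟪A, A⟫ * ⟪B, B⟫ - ⟪A, B⟫ ^ 2) := by
    intro p q r s
    rw [GA.wedge_inner, GA.inner_comb, GA.inner_comb, GA.inner_comb]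
    ring
  have hwedge : wedgeNormSq (fderiv ℝ (goldmanTan f ξ i j) ξ (goldmanTan f ξ i j ξ))
      (goldmanTan f ξ i j ξ) = (-((N / D) ^ 2 * Q)) ^ 2 * (N / D) := by
    rw [hfd, hTeq, key, hps, hαγ]
  have hTT : ⟪goldmanTan f ξ i j ξ, goldmanTan f ξ i j ξ⟫ = N ^ 2 / D := by
    rw [hTeq, GA.inner_comb, hr, hs, hAdef, hBdef, GA.v3 f ξ i j hij, GA.v4 f ξ i j hij,
      GA.v5 f ξ i j hij, ← hGidef, ← hGjdef, ← hNdef, ← hDdef]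
    exact GA.tt_scalar Gi Gj N D hD0.ne' hDdef
  have hnorm : ‖goldmanTan f ξ i j ξ‖ = Real.sqrt (N ^ 2 / D) := by
    rw [← Real.sqrt_sq (norm_nonneg (goldmanTan f ξ i j ξ)), ← real_inner_self_eq_norm_sq,
      hTT]
  unfold goldmanCurv
  rw [hwedge, hnorm, GA.final_num N D Q hN0 hD0]


/-- Goldman's curvature of the intersection curve `∂F ∩ P(ξ, u^j(ξ))`, given near `ξ` by
the `n − 1` implicit equations `f = 0, p_{k₁ξ} = 0, …, p_{k_{n−2}ξ} = 0`, equals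
`|f_{x_ix_i}f_{x_j}² − 2f_{x_i}f_{x_j}f_{x_ix_j} + f_{x_jx_j}f_{x_i}²| /
(‖∇f(ξ)‖(f_{x_i}² + f_{x_j}²))`. -/
theorem goldmanCurv_eq_hessian_formula
    {n : ℕ} (hn : 3 ≤ n) (F : Set (Euc n)) (hF : IsCompact F) (hFc : Convex ℝ F)
    (h0 : (0 : Euc n) ∈ interior F) (ξ : Euc n) (hξ : ξ ∈ frontier F)
    (f : Euc n → ℝ) (δ : ℝ) (hδ : 0 < δ) (hf : ContDiffOn ℝ 2 f (Metric.ball ξ δ))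
    (hFf : F ⊆ {x | f x ≤ 0}) (hgr : 0 < ⟪ξ, gradient f ξ⟫)
    (hbd : ∀ x ∈ Metric.ball ξ δ, (x ∈ frontier F ↔ f x = 0))
    (i : Fin n) (hi : gradient f ξ i ≠ 0) (hifirst : ∀ k < i, gradient f ξ k = 0)
    (j : Fin n) (hj : j ≠ i) :
    goldmanCurv f ξ i j =
      |hessQ f ξ (EuclideanSpace.single i 1) (EuclideanSpace.single i 1) *
          gradient f ξ j ^ 2 -
        2 * gradient f ξ i * gradient f ξ j *
          hessQ f ξ (EuclideanSpace.single i 1) (EuclideanSpace.single j 1) +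
        hessQ f ξ (EuclideanSpace.single j 1) (EuclideanSpace.single j 1) *
          gradient f ξ i ^ 2| /
      (‖gradient f ξ‖ * (gradient f ξ i ^ 2 + gradient f ξ j ^ 2)) := by
  have hnorm : ‖gradient f ξ‖ = Real.sqrt (∑ c, gradient f ξ c ^ 2) := by
    rw [EuclideanSpace.norm_eq]
    simp [Real.norm_eq_abs, sq_abs]
  rw [goldman_main_lemma f ξ δ hδ hf i hi j hj, hnorm]

end
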